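/- Let q = p^k with k odd, q ≡ 1 (mod 4), and let s be the maximal size of a set B ⊆ F_q with B - B ⊆ Q ∪ {0}. If ⌊√q⌋ is odd then s² + 2s - 2 ≤ q. -/

import Mathlib

open Finset

section Aux

set_option linter.unusedSectionVars false

variable {F : Type*} [Field F] [Fintype F] [DecidableEq F]

lemma aux_nonsq_ne_zero {a : F} (h : ¬ IsSquare a) : a ≠ 0 := by
  rintro rfl; exact h ⟨0, by ring⟩

lemma aux_nonsq_mul_inv_sq {a b : F} (ha : ¬ IsSquare a) (hb : IsSquare b) (hb0 : b ≠ 0) :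
    ¬ IsSquare (a * b⁻¹) := by
  intro h
  have := h.mul hb
  rw [inv_mul_cancel_right₀ hb0] at this
  exact ha this

lemma aux_key_sum (hF2 : ringChar F ≠ 2) {d : F} (hd : d ≠ 0) :
    ∑ w : F, quadraticChar F (w * (w + d)) = -1 := by
  have h0 : quadraticChar F (0 * (0 + d)) = 0 := by simp
  rw [← Finset.add_sum_erase Finset.univ _ (Finset.mem_univ (0:F)), h0, zero_add]
  have step1 : ∀ w ∈ Finset.univ.erase (0:F),
      quadraticChar F (w * (w + d)) = quadraticChar F (1 + d * w⁻¹) := by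
    intro w hw
    have hw0 : w ≠ 0 := (Finset.mem_erase.mp hw).1
    have : w * (w + d) = w^2 * (1 + d * w⁻¹) := by field_simp
    rw [this, map_mul, quadraticChar_sq_one' hw0, one_mul]
  rw [Finset.sum_congr rfl step1]
  have : ∑ w ∈ Finset.univ.erase (0:F), quadraticChar F (1 + d * w⁻¹)
      = ∑ y ∈ Finset.univ.erase (1:F), quadraticChar F y := by
    apply Finset.sum_nbij' (i := fun w => 1 + d * w⁻¹) (j := fun y => d * (y - 1)⁻¹)
    · intro a ha
      have ha0 : a ≠ 0 := (Finset.mem_erase.mp ha).1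
      simp only [Finset.mem_erase, Finset.mem_univ, and_true]
      intro h
      have : d * a⁻¹ = 0 := by linear_combination h
      rcases mul_eq_zero.mp this with h | h
      · exact hd h
      · exact ha0 (inv_eq_zero.mp h)
    · intro y hy
      have hy1 : y ≠ 1 := (Finset.mem_erase.mp hy).1
      simp only [Finset.mem_erase, Finset.mem_univ, and_true]
      exact mul_ne_zero hd (inv_ne_zero (sub_ne_zero.mpr hy1))
    · intro a ha
      have ha0 : a ≠ 0 := (Finset.mem_erase.mp ha).1
      field_simp
      rw [add_sub_cancel_left, div_self hd]
    · intro y hy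
      have hy1 : y ≠ 1 := (Finset.mem_erase.mp hy).1
      have : y - 1 ≠ 0 := sub_ne_zero.mpr hy1
      field_simp
      ring
    · intro a ha; rfl
  rw [this, Finset.sum_erase_eq_sub (Finset.mem_univ (1:F)), quadraticChar_sum_zero hF2, map_one]
  ring

theorem aux_card_nonsq (hF2 : ringChar F ≠ 2) :
    (2 : ℤ) * ((univ.filter (fun a : F => ¬ IsSquare a)).card : ℤ)
      = (Fintype.card F : ℤ) - 1 := by
  have h1 : ∑ a : F, (quadraticChar F a + 1) = (Fintype.card F : ℤ) := by
    rw [Finset.sum_add_distrib, quadraticChar_sum_zero hF2]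
    simp [Finset.card_univ]
  rw [← Finset.sum_filter_add_sum_filter_not univ (fun a : F => ¬ IsSquare a)
    (fun a => quadraticChar F a + 1)] at h1
  have h2 : ∑ a ∈ univ.filter (fun a : F => ¬ IsSquare a), (quadraticChar F a + 1) = 0 := by
    apply Finset.sum_eq_zero
    intro a ha
    rw [quadraticChar_neg_one_iff_not_isSquare.mpr (Finset.mem_filter.mp ha).2]
    ring
  have h3 : ∑ a ∈ univ.filter (fun a : F => ¬¬ IsSquare a), (quadraticChar F a + 1)
      = 2 * ((univ.filter (fun a : F => ¬¬ IsSquare a)).card : ℤ) - 1 := by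
    have key : ∀ a ∈ univ.filter (fun a : F => ¬¬ IsSquare a),
        quadraticChar F a + 1 = 2 - (if a = 0 then 1 else 0) := by
      intro a ha
      rcases eq_or_ne a 0 with rfl | h0
      · simp
      · rw [(quadraticChar_one_iff_isSquare h0).mpr (not_not.mp (Finset.mem_filter.mp ha).2)]
        simp [h0]
    rw [Finset.sum_congr rfl key, Finset.sum_sub_distrib, Finset.sum_const, Finset.sum_ite_eq']
    have h0mem : (0:F) ∈ univ.filter (fun a : F => ¬¬ IsSquare a) := by
      simp [IsSquare.zero]
    simp [h0mem, mul_comm]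
  rw [h2, h3, zero_add] at h1
  have hcards : (univ.filter (fun a : F => ¬ IsSquare a)).card
      + (univ.filter (fun a : F => ¬¬ IsSquare a)).card = Fintype.card F := by
    rw [Finset.card_filter_add_card_filter_not]
    exact Finset.card_univ
  have := congrArg (Nat.cast : ℕ → ℤ) hcards
  push_cast at this
  linarith

theorem aux_single_count (b : F) :
    (Finset.univ.filter (fun z : F => ¬ IsSquare (z - b))).card
      = (Finset.univ.filter (fun a : F => ¬ IsSquare a)).card := by
  apply Finset.card_nbij (i := fun z => z - b)
  · intro z hz
    simpa using (Finset.mem_filter.mp hz).2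
  · intro z hz z' hz' h
    exact sub_left_injective h
  · intro a ha
    refine ⟨a + b, ?_, by simp⟩
    simpa using (Finset.mem_filter.mp ha).2

theorem aux_pair_count (hF2 : ringChar F ≠ 2) {b b' : F} (hne : b ≠ b')
    (hsq : IsSquare (b - b')) (hsq' : IsSquare (b' - b)) :
    4 * ((Finset.univ.filter
      (fun z : F => ¬ IsSquare (z - b) ∧ ¬ IsSquare (z - b'))).card : ℤ)
      = (Fintype.card F : ℤ) - 1 := by
  have hshift : ∀ c : F, ∑ z : F, quadraticChar F (z - c) = 0 := by
    intro c
    rw [← quadraticChar_sum_zero hF2]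
    exact Fintype.sum_bijective (fun z => z - c) (Equiv.subRight c).bijective _ _ (fun z => rfl)
  have hprod : ∑ z : F, quadraticChar F ((z - b) * (z - b')) = -1 := by
    have : ∀ z : F, (z - b) * (z - b') = (z - b) * ((z - b) + (b - b')) := by
      intro z; ring
    simp_rw [this]
    rw [← aux_key_sum hF2 (sub_ne_zero.mpr hne)]
    exact Fintype.sum_bijective (fun z => z - b) (Equiv.subRight b).bijective _ _ (fun z => rfl)
  have expand : ∑ z : F, (1 - quadraticChar F (z - b)) * (1 - quadraticChar F (z - b'))
      = (Fintype.card F : ℤ) - 1 := by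
    have : ∀ z : F, (1 - quadraticChar F (z - b)) * (1 - quadraticChar F (z - b'))
        = 1 - quadraticChar F (z - b) - quadraticChar F (z - b')
          + quadraticChar F ((z - b) * (z - b')) := by
      intro z; rw [map_mul]; ring
    simp_rw [this]
    rw [Finset.sum_add_distrib, Finset.sum_sub_distrib, Finset.sum_sub_distrib,
      hshift b, hshift b', hprod]
    simp only [Finset.sum_const, Finset.card_univ, nsmul_eq_mul, mul_one]
    ring
  have hval2 : ∀ u : F, ¬ IsSquare u → (1 - quadraticChar F u) = 2 := by
    intro u hu; rw [quadraticChar_neg_one_iff_not_isSquare.mpr hu]; ring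
  have hval0 : ∀ u : F, u ≠ 0 → IsSquare u → (1 - quadraticChar F u) = 0 := by
    intro u hu hsu; rw [(quadraticChar_one_iff_isSquare hu).mpr hsu]; ring
  have pointwise : ∀ z : F, (1 - quadraticChar F (z - b)) * (1 - quadraticChar F (z - b'))
      = if (¬ IsSquare (z - b) ∧ ¬ IsSquare (z - b')) then 4 else 0 := by
    intro z
    by_cases h1 : IsSquare (z - b)
    · rw [if_neg (by tauto)]
      rcases eq_or_ne (z - b) 0 with hz0 | hz0
      · have hzb : z = b := by linear_combination hz0
        have : z - b' = b - b' := by rw [hzb]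
        rw [this, hval0 _ (sub_ne_zero.mpr hne) hsq, mul_zero]
      · rw [hval0 _ hz0 h1, zero_mul]
    · by_cases h2 : IsSquare (z - b')
      · rw [if_neg (by tauto)]
        rcases eq_or_ne (z - b') 0 with hz0 | hz0
        · have hzb : z = b' := by linear_combination hz0
          have heq : z - b = b' - b := by rw [hzb]
          exact absurd (heq ▸ hsq') h1
        · rw [hval0 _ hz0 h2, mul_zero]
      · rw [if_pos ⟨h1, h2⟩, hval2 _ h1, hval2 _ h2]; norm_num
  rw [← expand, Finset.sum_congr rfl (fun z _ => pointwise z), Finset.sum_ite,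
    Finset.sum_const, Finset.sum_const_zero, add_zero, nsmul_eq_mul, mul_comm]


theorem aux_sq_le (hF2 : ringChar F ≠ 2) (B : Finset F)
    (hgood : ∀ b₁ ∈ B, ∀ b₂ ∈ B, b₁ ≠ b₂ → b₁ - b₂ ≠ 0 ∧ IsSquare (b₁ - b₂)) :
    B.card * B.card ≤ Fintype.card F := by
  obtain ⟨v, hv⟩ := FiniteField.exists_nonsquare hF2
  have hv0 : v ≠ 0 := aux_nonsq_ne_zero hv
  have : (B ×ˢ B).card ≤ (Finset.univ : Finset F).card := by
    apply Finset.card_le_card_of_injOn (fun p => p.1 + v * p.2)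
    · intro p _; exact Finset.mem_univ _
    · rintro ⟨x₁, y₁⟩ h₁ ⟨x₂, y₂⟩ h₂ h
      simp only [Finset.coe_product, Set.mem_prod, Finset.mem_coe] at h₁ h₂
      simp only at h
      have hx : x₁ = x₂ := by
        by_contra hx
        have h1 := hgood x₁ h₁.1 x₂ h₂.1 hx
        have hy : y₂ ≠ y₁ := by
          rintro rfl
          exact h1.1 (by linear_combination h)
        have h2 := hgood y₂ h₂.2 y₁ h₁.2 hy
        have hsub : x₁ - x₂ = v * (y₂ - y₁) := by linear_combination h
        have hveq : v = (x₁ - x₂) * (y₂ - y₁)⁻¹ := by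
          rw [hsub, mul_assoc, mul_inv_cancel₀ h2.1, mul_one]
        obtain ⟨r, hr⟩ := h1.2
        obtain ⟨u, hu⟩ := h2.2
        have hu0 : u ≠ 0 := by
          intro h0; exact h2.1 (by rw [hu, h0]; ring)
        exact hv ⟨r * u⁻¹, by rw [hveq, hr, hu, mul_inv]; ring⟩
      subst hx
      have : y₁ = y₂ := by
        have := mul_left_cancel₀ hv0 (by linear_combination h : v * y₁ = v * y₂)
        exact this
      simp [this]
  simpa [Finset.card_product, Finset.card_univ] using this

theorem aux_core (hF2 : ringChar F ≠ 2) (B : Finset F) (h0 : (0:F) ∈ B)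
    (hgood : ∀ b₁ ∈ B, ∀ b₂ ∈ B, b₁ ≠ b₂ → b₁ - b₂ ≠ 0 ∧ IsSquare (b₁ - b₂))
    (hmax : ∀ z : F, z ∉ B → ∃ b ∈ B, ¬ IsSquare (z - b))
    (hodd : Odd B.card) (h3 : 3 ≤ B.card)
    (hlt : (Fintype.card F : ℤ) ≤ (B.card : ℤ)^2 + 2*(B.card : ℤ) - 3) :
    (Fintype.card F : ℤ) ≤ (B.card : ℤ)^2 := by
  set q : ℕ := Fintype.card F with hqdef
  set s : ℕ := B.card with hsdef
  set N : ℕ := (univ.filter (fun a : F => ¬ IsSquare a)).card with hNdef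
  have hN : (2:ℤ) * N = (q:ℤ) - 1 := aux_card_nonsq hF2
  -- the function t
  set t : F → ℕ := fun z => (B.filter (fun b => ¬ IsSquare (z - b))).card with htdef
  -- membership in B forces square differences
  have hnotin : ∀ b ∈ B, ∀ z : F, ¬ IsSquare (z - b) → z ∉ B := by
    intro b hb z hz hzB
    rcases eq_or_ne z b with rfl | hne
    · exact hz (by simp)
    · exact hz (hgood z hzB b hb hne).2
  -- elements of B \ {0} are nonzero squares
  have hBsq : ∀ b' ∈ B.erase 0, IsSquare b' ∧ b' ≠ 0 := by
    intro b' hb'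
    obtain ⟨hb'0, hb'B⟩ := Finset.mem_erase.mp hb'
    have := hgood b' hb'B 0 h0 hb'0
    rw [sub_zero] at this
    exact ⟨this.2, hb'0⟩
  -- Lemma A : t z * (s-1) ≤ N for z ∉ B
  have hA : ∀ z : F, z ∉ B → t z * (s - 1) ≤ N := by
    intro z hz
    have hcard : ((B.filter (fun b => ¬ IsSquare (z - b))) ×ˢ (B.erase 0)).card
        = t z * (s - 1) := by
      rw [Finset.card_product, Finset.card_erase_of_mem h0]
    rw [← hcard, hNdef]
    apply Finset.card_le_card_of_injOn (fun p => (z - p.1) * p.2⁻¹)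
    · rintro ⟨b, b'⟩ hp
      simp only [Finset.coe_product, Set.mem_prod, Finset.mem_coe] at hp
      obtain ⟨hb, hb'⟩ := hp
      obtain ⟨hbB, hbns⟩ := Finset.mem_filter.mp hb
      obtain ⟨hb'sq, hb'0⟩ := hBsq b' hb'
      simp only [Finset.mem_coe, Finset.mem_filter, Finset.mem_univ, true_and]
      exact aux_nonsq_mul_inv_sq hbns hb'sq hb'0
    · rintro ⟨b₁, b₁'⟩ hp₁ ⟨b₂, b₂'⟩ hp₂ heq
      simp only [Finset.coe_product, Set.mem_prod, Finset.mem_coe] at hp₁ hp₂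
      obtain ⟨hb₁, hb₁'⟩ := hp₁
      obtain ⟨hb₂, hb₂'⟩ := hp₂
      obtain ⟨hb₁B, hb₁ns⟩ := Finset.mem_filter.mp hb₁
      obtain ⟨hb₂B, hb₂ns⟩ := Finset.mem_filter.mp hb₂
      obtain ⟨hb₁'sq, hb₁'0⟩ := hBsq b₁' hb₁'
      obtain ⟨hb₂'sq, hb₂'0⟩ := hBsq b₂' hb₂'
      have hb₁'B : b₁' ∈ B := (Finset.mem_erase.mp hb₁').2
      have hb₂'B : b₂' ∈ B := (Finset.mem_erase.mp hb₂').2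
      simp only at heq
      have hz₁ : z - b₁ ≠ 0 := fun h => hb₁ns (by rw [h]; simp)
      have heq' : (z - b₁) * b₂' = (z - b₂) * b₁' := by
        field_simp at heq
        linear_combination heq
      have hb12 : b₁ = b₂ := by
        by_contra hne
        have hg := hgood b₁ hb₁B b₂ hb₂B hne
        have hyne : b₂' ≠ b₁' := by
          rintro rfl
          apply hg.1
          have := mul_right_cancel₀ hb₁'0 heq'
          linear_combination - this
        have hg' := hgood b₂' hb₂'B b₁' hb₁'B hyne
        -- z - b₁ = (b₁ - b₂) * (b₂' - b₁')⁻¹ * b₁'  is a square, contradiction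
        apply hb₁ns
        have hkey : (z - b₁) * (b₂' - b₁') = (b₁ - b₂) * b₁' := by
          have hzb₂ : z - b₂ = (z - b₁) + (b₁ - b₂) := by ring
          rw [hzb₂] at heq'
          linear_combination heq'
        obtain ⟨r, hr⟩ := hg.2
        obtain ⟨u, hu⟩ := hb₁'sq
        obtain ⟨w, hw⟩ := hg'.2
        have hw0 : w ≠ 0 := fun hh => hg'.1 (by rw [hw, hh]; ring)
        have h1 : (z - b₁) * (w * w) = r * r * (u * u) := by
          rw [← hw, ← hr, ← hu]; exact hkey
        have h2 : (r * u * w⁻¹) * (r * u * w⁻¹) * (w * w) = r * r * (u * u) := by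
          field_simp
        exact ⟨r * u * w⁻¹, mul_right_cancel₀ (mul_ne_zero hw0 hw0) (by rw [h1, ← h2])⟩
      subst hb12
      have : b₁' = b₂' := by
        have h1 : (z - b₁) * b₂' = (z - b₁) * b₁' := by linear_combination heq'
        have := mul_left_cancel₀ hz₁ h1
        exact this.symm
      simp [this]
  -- M1 : ∑ t = s * N over Bᶜ
  have hM1 : ∑ z ∈ Bᶜ, t z = s * N := by
    have : ∀ z ∈ Bᶜ, t z = ∑ b ∈ B, if ¬ IsSquare (z - b) then 1 else 0 := by
      intro z _
      rw [htdef]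
      simp [Finset.card_filter]
    rw [Finset.sum_congr rfl this, Finset.sum_comm]
    have inner : ∀ b ∈ B, (∑ z ∈ Bᶜ, if ¬ IsSquare (z - b) then 1 else 0) = N := by
      intro b hb
      rw [← Finset.sum_filter, Finset.sum_const, smul_eq_mul, mul_one]
      rw [hNdef, ← aux_single_count b]
      congr 1
      ext z
      simp only [Finset.mem_filter, Finset.mem_compl, Finset.mem_univ, true_and]
      constructor
      · rintro ⟨_, h⟩; exact h
      · intro h; exact ⟨hnotin b hb z h, h⟩
    rw [Finset.sum_congr rfl inner, Finset.sum_const, smul_eq_mul]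
  -- M2 : 4 * ∑ t^2 = 4*s*N + s*(s-1)*(q-1)  (in ℤ)
  have hM2 : 4 * ∑ z ∈ Bᶜ, ((t z : ℤ))^2
      = 4*(s:ℤ)*N + (s:ℤ)*((s:ℤ)-1)*((q:ℤ)-1) := by
    have hsq : ∀ z ∈ Bᶜ, ((t z : ℤ))^2
        = ∑ b ∈ B, ∑ b' ∈ B, if (¬ IsSquare (z - b) ∧ ¬ IsSquare (z - b')) then (1:ℤ) else 0 := by
      intro z _
      have : (t z : ℤ) = ∑ b ∈ B, if ¬ IsSquare (z - b) then (1:ℤ) else 0 := by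
        rw [htdef]
        simp [Finset.card_filter]
      rw [this, sq, Finset.sum_mul_sum]
      congr 1; ext b; congr 1; ext b'
      by_cases h1 : IsSquare (z - b) <;> by_cases h2 : IsSquare (z - b') <;> simp [h1, h2]
    rw [Finset.sum_congr rfl hsq]
    rw [Finset.sum_comm]
    have swap2 : ∀ b ∈ B, ∑ z ∈ Bᶜ, ∑ b' ∈ B,
          (if (¬ IsSquare (z - b) ∧ ¬ IsSquare (z - b')) then (1:ℤ) else 0)
        = ∑ b' ∈ B, ((univ.filter (fun z : F => ¬ IsSquare (z - b) ∧ ¬ IsSquare (z - b'))).card : ℤ) := by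
      intro b hb
      rw [Finset.sum_comm]
      apply Finset.sum_congr rfl
      intro b' hb'
      rw [← Finset.sum_filter, Finset.sum_const, nsmul_eq_mul, mul_one]
      congr 1
      have : Bᶜ.filter (fun z : F => ¬ IsSquare (z - b) ∧ ¬ IsSquare (z - b'))
          = univ.filter (fun z : F => ¬ IsSquare (z - b) ∧ ¬ IsSquare (z - b')) := by
        ext z
        simp only [Finset.mem_filter, Finset.mem_compl, Finset.mem_univ, true_and]
        constructor
        · rintro ⟨_, h⟩; exact h
        · intro h; exact ⟨hnotin b hb z h.1, h⟩
      rw [this]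
    rw [Finset.sum_congr rfl swap2]
    -- now split diagonal and off-diagonal
    rw [Finset.mul_sum]
    have split : ∀ b ∈ B, 4 * ∑ b' ∈ B,
          ((univ.filter (fun z : F => ¬ IsSquare (z - b) ∧ ¬ IsSquare (z - b'))).card : ℤ)
        = 4 * (N:ℤ) + ((s:ℤ) - 1) * ((q:ℤ)-1) := by
      intro b hb
      rw [Finset.mul_sum, ← Finset.add_sum_erase B _ hb]
      have hdiag : 4 * ((univ.filter (fun z : F => ¬ IsSquare (z - b) ∧ ¬ IsSquare (z - b))).card : ℤ)
          = 4 * (N:ℤ) := by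
        congr 2
        rw [hNdef, ← aux_single_count b]
        congr 1
        ext z
        simp only [Finset.mem_filter, Finset.mem_univ, true_and, and_self]
      have hoff : ∀ b' ∈ B.erase b,
          4 * ((univ.filter (fun z : F => ¬ IsSquare (z - b) ∧ ¬ IsSquare (z - b'))).card : ℤ)
            = (q:ℤ) - 1 := by
        intro b' hb'
        obtain ⟨hb'ne, hb'B⟩ := Finset.mem_erase.mp hb'
        exact aux_pair_count hF2 (Ne.symm hb'ne) (hgood b hb b' hb'B (Ne.symm hb'ne)).2
          (hgood b' hb'B b hb hb'ne).2
      rw [hdiag, Finset.sum_congr rfl hoff, Finset.sum_const, Finset.card_erase_of_mem hb]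
      rw [nsmul_eq_mul, Nat.cast_sub (by omega : 1 ≤ B.card)]
      push_cast
      ring
    rw [Finset.sum_congr rfl split, Finset.sum_const, hsdef]
    push_cast
    ring
  -- lower bound on t
  have hlow : ∀ z ∈ Bᶜ, 1 ≤ t z := by
    intro z hz
    obtain ⟨b, hb, hns⟩ := hmax z (Finset.mem_compl.mp hz)
    have : b ∈ B.filter (fun b => ¬ IsSquare (z - b)) := Finset.mem_filter.mpr ⟨hb, hns⟩
    exact Finset.card_pos.mpr ⟨b, this⟩
  -- upper bound on t : 2 * t z ≤ s + 1
  have hup : ∀ z ∈ Bᶜ, 2 * (t z : ℤ) ≤ (s:ℤ) + 1 := by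
    intro z hz
    have hAz := hA z (Finset.mem_compl.mp hz)
    have hAz' : (t z : ℤ) * ((s:ℤ) - 1) ≤ N := by
      have := (Nat.cast_le (α := ℤ)).mpr hAz
      push_cast [Nat.cast_sub (by omega : 1 ≤ s)] at this
      exact this
    obtain ⟨a, ha⟩ := hodd
    have has : (s:ℤ) = 2*(a:ℤ)+1 := by exact_mod_cast ha
    have ha1 : 1 ≤ (a:ℤ) := by
      have h3' : 3 ≤ (s:ℤ) := by exact_mod_cast h3
      omega
    by_contra hc
    push_neg at hc
    have h1 : (a:ℤ) + 2 ≤ (t z:ℤ) := by omega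
    have h2 : 2*(a:ℤ)^2 + 4*(a:ℤ) ≤ (t z:ℤ)*((s:ℤ)-1) := by
      have hs1 : (s:ℤ) - 1 = 2*(a:ℤ) := by omega
      rw [hs1]
      calc 2*(a:ℤ)^2 + 4*(a:ℤ) = ((a:ℤ)+2) * (2*(a:ℤ)) := by ring
        _ ≤ (t z:ℤ) * (2*(a:ℤ)) := by
            apply mul_le_mul_of_nonneg_right h1 (by positivity)
    have h3' : (s:ℤ)^2 = 4*(a:ℤ)^2+4*(a:ℤ)+1 := by rw [has]; ring
    linarith [hAz', hN, hlt, h2, h3', has]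
  -- final summation
  have hptwise : ∀ z ∈ Bᶜ, (0:ℤ) ≤ ((t z : ℤ) - 1) * (((s:ℤ)+1) - 2*(t z : ℤ)) := by
    intro z hz
    have h1 := hlow z hz
    have h2 := hup z hz
    have h1' : (1:ℤ) ≤ (t z : ℤ) := by exact_mod_cast h1
    nlinarith
  have hsum : (0:ℤ) ≤ ∑ z ∈ Bᶜ, ((t z : ℤ) - 1) * (((s:ℤ)+1) - 2*(t z : ℤ)) :=
    Finset.sum_nonneg hptwise
  have hexpand : ∑ z ∈ Bᶜ, ((t z : ℤ) - 1) * (((s:ℤ)+1) - 2*(t z : ℤ))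
      = ((s:ℤ)+3) * (∑ z ∈ Bᶜ, (t z : ℤ)) - 2 * (∑ z ∈ Bᶜ, ((t z : ℤ))^2)
        - ((s:ℤ)+1) * (Bᶜ.card : ℤ) := by
    have hterm : ∀ z ∈ Bᶜ, ((t z : ℤ) - 1) * (((s:ℤ)+1) - 2*(t z : ℤ))
        = (((s:ℤ)+3) * (t z : ℤ) - 2 * ((t z : ℤ))^2) - ((s:ℤ)+1) := by
      intro z _; ring
    rw [Finset.sum_congr rfl hterm, Finset.sum_sub_distrib, Finset.sum_sub_distrib,
      Finset.sum_const, nsmul_eq_mul, Finset.mul_sum, Finset.mul_sum]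
    ring
  have hcompl : ((Bᶜ.card : ℤ)) = (q:ℤ) - (s:ℤ) := by
    rw [Finset.card_compl, Nat.cast_sub (Finset.card_le_univ B)]
  have hM1' : ∑ z ∈ Bᶜ, (t z : ℤ) = (s:ℤ)*(N:ℤ) := by exact_mod_cast hM1
  have hid : 2*((s:ℤ)^2 - (q:ℤ))
      = 2*(∑ z ∈ Bᶜ, ((t z : ℤ) - 1) * (((s:ℤ)+1) - 2*(t z : ℤ))) := by
    rw [hexpand, hM1', hcompl]
    linear_combination hM2 - (s:ℤ)*((s:ℤ)+1) * hN
  linarith [hsum, hid]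

end Aux

theorem stmt_11 {F : Type*} [Field F] [Fintype F] (p k s : ℕ)
    (hp : p.Prime) (hk : Odd k) (hcard : Fintype.card F = p ^ k)
    (hq : Fintype.card F % 4 = 1)
    (hs : IsGreatest {n : ℕ | ∃ B : Finset F,
      (∀ b₁ ∈ B, ∀ b₂ ∈ B, b₁ ≠ b₂ → b₁ - b₂ ≠ 0 ∧ IsSquare (b₁ - b₂)) ∧
      B.card = n} s)
    (hodd2 : Odd (Nat.sqrt (Fintype.card F))) :
    (s : ℤ) ^ 2 + 2 * s - 2 ≤ (Fintype.card F : ℤ) := by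
  classical
  obtain ⟨⟨B, hgoodB, hcardB⟩, hub⟩ := hs
  have hF2 : ringChar F ≠ 2 := by
    intro h
    have := FiniteField.even_card_iff_char_two.mp h
    omega
  have hsq_le : s * s ≤ Fintype.card F := by
    rw [← hcardB]; exact aux_sq_le hF2 B hgoodB
  have hm1 : Nat.sqrt (Fintype.card F) * Nat.sqrt (Fintype.card F) ≤ Fintype.card F :=
    by have := Nat.sqrt_le' (Fintype.card F); nlinarith [this]
  have hm2 : Fintype.card F < (Nat.sqrt (Fintype.card F) + 1) * (Nat.sqrt (Fintype.card F) + 1) :=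
    by have := Nat.lt_succ_sqrt' (Fintype.card F); nlinarith [this]
  have hsm : s ≤ Nat.sqrt (Fintype.card F) := by
    by_contra h
    push_neg at h
    have : Nat.sqrt (Fintype.card F) + 1 ≤ s := h
    nlinarith [hsq_le, hm2]
  rcases lt_or_eq_of_le hsm with hlt' | heq'
  · -- easy case : s + 1 ≤ sqrt q
    have h1 : s + 1 ≤ Nat.sqrt (Fintype.card F) := hlt'
    have h2 : (s+1)*(s+1) ≤ Fintype.card F := le_trans (Nat.mul_le_mul h1 h1) hm1
    have h3 := (Nat.cast_le (α := ℤ)).mpr h2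
    push_cast at h3
    nlinarith [h3]
  · -- hard case : s = sqrt q
    have hsodd : Odd s := heq' ▸ hodd2
    have hq5 : 5 ≤ Fintype.card F := by
      have h2 : 1 < Fintype.card F := Fintype.one_lt_card
      omega
    have hm3 : 3 ≤ s := by
      have h2 : 2 ≤ Nat.sqrt (Fintype.card F) := by
        rw [Nat.le_sqrt]
        omega
      obtain ⟨j, hj⟩ := hsodd
      omega
    by_contra hcon
    push_neg at hcon
    have hlt2 : (Fintype.card F:ℤ) ≤ (s:ℤ)^2 + 2*(s:ℤ) - 3 := by linarith [hcon]
    -- translate B so that it contains 0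
    have hBne : B.Nonempty := Finset.card_pos.mp (by omega)
    obtain ⟨b₀, hb₀⟩ := hBne
    set B' : Finset F := B.image (fun x => x - b₀) with hB'def
    have hB'card : B'.card = s := by
      rw [hB'def, Finset.card_image_of_injective _ sub_left_injective, hcardB]
    have h0B' : (0:F) ∈ B' := Finset.mem_image.mpr ⟨b₀, hb₀, sub_self b₀⟩
    have hgood' : ∀ b₁ ∈ B', ∀ b₂ ∈ B', b₁ ≠ b₂ → b₁ - b₂ ≠ 0 ∧ IsSquare (b₁ - b₂) := by
      intro x hx y hy hxy
      obtain ⟨x₀, hx₀, rfl⟩ := Finset.mem_image.mp hx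
      obtain ⟨y₀, hy₀, rfl⟩ := Finset.mem_image.mp hy
      have hne : x₀ ≠ y₀ := fun h => hxy (by rw [h])
      have hg := hgoodB x₀ hx₀ y₀ hy₀ hne
      have heq : x₀ - b₀ - (y₀ - b₀) = x₀ - y₀ := by ring
      rw [heq]
      exact hg
    have hneg1 : IsSquare (-1 : F) := FiniteField.isSquare_neg_one_iff.mpr (by omega)
    have hmax' : ∀ z : F, z ∉ B' → ∃ b ∈ B', ¬ IsSquare (z - b) := by
      intro z hz
      by_contra hno
      push_neg at hno
      have hgoodC : ∀ b₁ ∈ insert z B', ∀ b₂ ∈ insert z B', b₁ ≠ b₂ →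
          b₁ - b₂ ≠ 0 ∧ IsSquare (b₁ - b₂) := by
        intro x hx y hy hxy
        rcases Finset.mem_insert.mp hx with rfl | hxB
        · rcases Finset.mem_insert.mp hy with rfl | hyB
          · exact absurd rfl hxy
          · have hne0 : x - y ≠ 0 := sub_ne_zero.mpr (fun h => hz (h ▸ hyB))
            exact ⟨hne0, hno y hyB⟩
        · rcases Finset.mem_insert.mp hy with rfl | hyB
          · have hne0 : x - y ≠ 0 := sub_ne_zero.mpr (fun h => hz (h ▸ hxB))
            refine ⟨hne0, ?_⟩
            have : x - y = (-1) * (y - x) := by ring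
            rw [this]
            exact hneg1.mul (hno x hxB)
          · exact hgood' x hxB y hyB hxy
      have hmem : (insert z B').card ∈ {n : ℕ | ∃ B : Finset F,
          (∀ b₁ ∈ B, ∀ b₂ ∈ B, b₁ ≠ b₂ → b₁ - b₂ ≠ 0 ∧ IsSquare (b₁ - b₂)) ∧
          B.card = n} := ⟨insert z B', hgoodC, rfl⟩
      have := hub hmem
      rw [Finset.card_insert_of_notMem hz, hB'card] at this
      omega
    have hcore := aux_core hF2 B' h0B' hgood' hmax'
      (hB'card ▸ hsodd) (hB'card ▸ hm3) (by rw [hB'card]; exact hlt2)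
    rw [hB'card] at hcore
    -- q is not a perfect square
    have hqs : Fintype.card F ≠ s * s := by
      intro h
      have hs0 : s ≠ 0 := by omega
      have hpk : p ^ k = s * s := by rw [← hcard, h]
      have h1 : (p ^ k).factorization p = k := by
        simp [hp.factorization_pow]
      have h2 : ((s * s)).factorization p = s.factorization p + s.factorization p := by
        rw [Nat.factorization_mul hs0 hs0]
        rfl
      rw [hpk, h2] at h1
      obtain ⟨j, hj⟩ := hk
      omega
    have hqle : Fintype.card F ≤ s * s := by
      have : (Fintype.card F : ℤ) ≤ (s:ℤ) * s := by nlinarith [hcore]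
      exact_mod_cast this
    omega
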